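/- arXiv:2403.05744 — 5 statements merged into one kernel-verified Lean document; each statement's English description precedes it below -/
import Mathlib

section
/- Let a21, b03, a03 be real numbers. Define P⁻(x,y) = 2·a21·x·y + a21·x²·y − 6·b03·y² − 3·b03·x·y² + a03·y³, Q(x,y) = x + (3/2)·x² − a21·y² + (1/2)·x³ − a21·x·y² + b03·y³, and H⁻(x,y) = −x²/2 − x³/2 − x⁴/8 + (a21/2)·x²·y² − b03·x·y³ + a21·x·y² − 2·b03·y³ + (a03/4)·y⁴. Then for every (x,y) ∈ ℝ², P⁻(x,y) = ∂H⁻/∂y (x,y) and Q(x,y) = −∂H⁻/∂x (x,y); moreover, with H⁺(x,y) = −x²/2 − x³/2 − x⁴/8 + (a21/2)·x²·y² − b03·x·y³ + a21·x·y² + (a03/4)·y⁴, one has H⁺(x,0) = H⁻(x,0) for all x ∈ ℝ. -/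
lemma deriv_quartic (a b c d e t : ℝ) :
    deriv (fun s : ℝ => a + b*s + c*s^2 + d*s^3 + e*s^4) t
      = b + 2*c*t + 3*d*t^2 + 4*e*t^3 := by
  have h : HasDerivAt (fun s : ℝ => a + b*s + c*s^2 + d*s^3 + e*s^4)
      (b + 2*c*t + 3*d*t^2 + 4*e*t^3) t := by
    have h1 : HasDerivAt (fun s : ℝ => s) 1 t := hasDerivAt_id t
    have h2 := hasDerivAt_pow 2 t
    have h3 := hasDerivAt_pow 3 t
    have h4 := hasDerivAt_pow 4 t
    have := ((((hasDerivAt_const t a).add (h1.const_mul b)).add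
      (h2.const_mul c)).add (h3.const_mul d)).add (h4.const_mul e)
    refine this.congr_deriv ?_
    push_cast
    ring
  exact h.deriv

/-- Under bi-center condition I, the lower system of the translated
Z₂-equivariant cubic switching system is Hamiltonian with Hamiltonian H⁻,
and H⁺ and H⁻ agree on the switching line y = 0. -/
theorem stmt_1 (a21 b03 a03 : ℝ)
    (Pm Q Hm Hp : ℝ → ℝ → ℝ)
    (hP : ∀ x y, Pm x y = 2*a21*x*y + a21*x^2*y - 6*b03*y^2 - 3*b03*x*y^2 + a03*y^3)
    (hQ : ∀ x y, Q x y = x + (3/2)*x^2 - a21*y^2 + (1/2)*x^3 - a21*x*y^2 + b03*y^3)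
    (hHm : ∀ x y, Hm x y = -x^2/2 - x^3/2 - x^4/8 + (a21/2)*x^2*y^2
        - b03*x*y^3 + a21*x*y^2 - 2*b03*y^3 + (a03/4)*y^4)
    (hHp : ∀ x y, Hp x y = -x^2/2 - x^3/2 - x^4/8 + (a21/2)*x^2*y^2
        - b03*x*y^3 + a21*x*y^2 + (a03/4)*y^4) :
    (∀ x y : ℝ,
      Pm x y = deriv (fun y' : ℝ => Hm x y') y ∧
      Q x y = - deriv (fun x' : ℝ => Hm x' y) x) ∧
    (∀ x : ℝ, Hp x 0 = Hm x 0) := by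
  constructor
  · intro x y
    constructor
    · rw [show (fun y' : ℝ => Hm x y')
          = (fun y' : ℝ => (-x^2/2 - x^3/2 - x^4/8) + 0*y'
              + ((a21/2)*x^2 + a21*x)*y'^2 + (-b03*x - 2*b03)*y'^3 + (a03/4)*y'^4)
          from funext fun y' => by rw [hHm]; ring,
        deriv_quartic, hP]
      ring
    · rw [show (fun x' : ℝ => Hm x' y)
          = (fun x' : ℝ => (-2*b03*y^3 + (a03/4)*y^4) + (a21*y^2 - b03*y^3)*x'
              + (-1/2 + (a21/2)*y^2)*x'^2 + (-1/2)*x'^3 + (-1/8)*x'^4)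
          from funext fun x' => by rw [hHm]; ring,
        deriv_quartic, hQ]
      ring
  · intro x
    rw [hHp, hHm]
    ring
end

section
/- Let a21, b03, a03 be real numbers, and define P(x,y) = 2·a21·x·y + a21·x²·y − 3·b03·x·y² + a03·y³, Q(x,y) = x + (3/2)·x² − a21·y² + (1/2)·x³ − a21·x·y² + b03·y³, and H⁺(x,y) = −x²/2 − x³/2 − x⁴/8 + (a21/2)·x²·y² − b03·x·y³ + a21·x·y² + (a03/4)·y⁴. If J ⊆ ℝ is an open interval and x, y : ℝ → ℝ are differentiable on J with x′(t) = P(x(t), y(t)) and y′(t) = Q(x(t), y(t)) for all t ∈ J, then the function t ↦ H⁺(x(t), y(t)) is constant on J. -/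
/-- Under bi-center condition I, the Hamiltonian H⁺ is a first integral of
the upper system: it is constant along every solution defined on an open
interval J. -/
theorem stmt_2 (a21 b03 a03 : ℝ)
    (P Q Hp : ℝ → ℝ → ℝ)
    (hP : ∀ x y, P x y = 2*a21*x*y + a21*x^2*y - 3*b03*x*y^2 + a03*y^3)
    (hQ : ∀ x y, Q x y = x + (3/2)*x^2 - a21*y^2 + (1/2)*x^3 - a21*x*y^2 + b03*y^3)
    (hH : ∀ x y, Hp x y = -x^2/2 - x^3/2 - x^4/8 + (a21/2)*x^2*y^2
        - b03*x*y^3 + a21*x*y^2 + (a03/4)*y^4)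
    (J : Set ℝ) (hJopen : IsOpen J) (hJconn : J.OrdConnected)
    (x y : ℝ → ℝ)
    (hx : ∀ t ∈ J, HasDerivAt x (P (x t) (y t)) t)
    (hy : ∀ t ∈ J, HasDerivAt y (Q (x t) (y t)) t) :
    ∀ t₁ ∈ J, ∀ t₂ ∈ J, Hp (x t₁) (y t₁) = Hp (x t₂) (y t₂) := by
  set h : ℝ → ℝ := fun s => Hp (x s) (y s) with hh
  have key : ∀ t ∈ J, HasDerivAt h 0 t := by
    intro t ht
    have hx' := hx t ht
    have hy' := hy t ht
    have e : h = fun s =>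
        -((x s)^2/2) - (x s)^3/2 - (x s)^4/8 + (a21/2)*(x s)^2*(y s)^2
          - b03*(x s)*(y s)^3 + a21*(x s)*(y s)^2 + (a03/4)*(y s)^4 := by
      funext s
      show Hp (x s) (y s) = _
      rw [hH]; ring
    rw [e]
    have A1 := ((hx'.pow 2).div_const 2).neg
    have A2 := A1.sub ((hx'.pow 3).div_const 2)
    have A3 := A2.sub ((hx'.pow 4).div_const 8)
    have A4 := A3.add (((hx'.pow 2).const_mul (a21/2)).mul (hy'.pow 2))
    have A5 := A4.sub ((hx'.const_mul b03).mul (hy'.pow 3))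
    have A6 := A5.add ((hx'.const_mul a21).mul (hy'.pow 2))
    have H := A6.add ((hy'.pow 4).const_mul (a03/4))
    convert H using 1
    case e'_4 => rfl
    case e'_5 => rfl
    case e'_8 =>
      funext s
      simp only [Pi.add_apply, Pi.sub_apply, Pi.neg_apply, Pi.mul_apply, Pi.pow_apply]
    rw [hP, hQ]
    push_cast [Pi.pow_apply]
    ring
  suffices key2 : ∀ a ∈ J, ∀ b ∈ J, a ≤ b → h a = h b by
    intro t₁ ht₁ t₂ ht₂
    rcases le_total t₁ t₂ with hle | hle
    · exact key2 t₁ ht₁ t₂ ht₂ hle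
    · exact (key2 t₂ ht₂ t₁ ht₁ hle).symm
  intro a ha b hb hab
  have hIcc : Set.Icc a b ⊆ J := hJconn.out ha hb
  have hcont : ContinuousOn h (Set.Icc a b) := fun s hs =>
    ((key s (hIcc hs)).continuousAt).continuousWithinAt
  have hderiv : ∀ s ∈ Set.Ico a b, HasDerivWithinAt h 0 (Set.Ici s) s := by
    intro s hs
    exact (key s (hIcc ⟨hs.1, hs.2.le⟩)).hasDerivWithinAt
  exact (constant_of_has_deriv_right_zero hcont hderiv b (Set.right_mem_Icc.mpr hab)).symm
end

section
/- Let a21, a03, b21 be real numbers satisfying 9·(a03 + 2·a21²)² + 8·a21·b21²·(3·a03 + 2·a21²) = 0. Define P(x,y) = −a21·y + a21·x²·y + a03·y³, Q(x,y) = −x/2 + x³/2 − b21·y + b21·x²·y − a21·x·y² − (2/3)·a21·b21·y³, and I(x,y) = 3·(9·a03 + 2·a21²)·(x² + 2·b21·x·y − 2·a21·y²) − (3·a03 − 2·a21²)·(3·x⁴ + 6·b21·x³·y − 12·a21·x²·y² − 4·a21·b21·x·y³ − 6·a03·y⁴). Then for every (x,y) ∈ ℝ², P(x,y)·∂I/∂x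 (x,y) + Q(x,y)·∂I/∂y (x,y) = (∂P/∂x (x,y) + ∂Q/∂y (x,y))·I(x,y); that is, I is an inverse integrating factor of the system ẋ = P, ẏ = Q. -/
/-- Under bi-center condition III, the polynomial I is an inverse integrating
factor of the smooth cubic system: P·I_x + Q·I_y = (P_x + Q_y)·I identically. -/
theorem stmt_4 (a21 a03 b21 : ℝ)
    (hcond : 9*(a03 + 2*a21^2)^2 + 8*a21*b21^2*(3*a03 + 2*a21^2) = 0)
    (P Q I : ℝ → ℝ → ℝ)
    (hP : ∀ x y, P x y = -a21*y + a21*x^2*y + a03*y^3)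
    (hQ : ∀ x y, Q x y = -x/2 + x^3/2 - b21*y + b21*x^2*y - a21*x*y^2
        - (2/3)*a21*b21*y^3)
    (hI : ∀ x y, I x y = 3*(9*a03 + 2*a21^2)*(x^2 + 2*b21*x*y - 2*a21*y^2)
        - (3*a03 - 2*a21^2)*(3*x^4 + 6*b21*x^3*y - 12*a21*x^2*y^2
            - 4*a21*b21*x*y^3 - 6*a03*y^4)) :
    ∀ x y : ℝ,
      P x y * deriv (fun x' : ℝ => I x' y) x
        + Q x y * deriv (fun y' : ℝ => I x y') y
      = (deriv (fun x' : ℝ => P x' y) x + deriv (fun y' : ℝ => Q x y') y)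
          * I x y := by
  intro x y
  -- ∂I/∂x
  have hIx : deriv (fun x' : ℝ => I x' y) x
      = 3*(9*a03 + 2*a21^2)*(2*x + 2*b21*y)
        - (3*a03 - 2*a21^2)*(12*x^3 + 18*b21*x^2*y - 24*a21*x*y^2
            - 4*a21*b21*y^3) := by
    have hfun : (fun x' : ℝ => I x' y)
        = fun x' : ℝ => 3*(9*a03 + 2*a21^2)*(x'^2 + 2*b21*x'*y - 2*a21*y^2)
          - (3*a03 - 2*a21^2)*(3*x'^4 + 6*b21*x'^3*y - 12*a21*x'^2*y^2
              - 4*a21*b21*x'*y^3 - 6*a03*y^4) := funext fun x' => hI x' y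
    rw [hfun]
    have inner1 : HasDerivAt
        (fun x' : ℝ => x'^2 + 2*b21*x'*y - 2*a21*y^2)
        ((2:ℕ)*x^(2-1) + 2*b21*1*y) x :=
      ((hasDerivAt_pow 2 x).add
        (((hasDerivAt_id x).const_mul (2*b21)).mul_const y)).sub_const (2*a21*y^2)
    have inner2 : HasDerivAt
        (fun x' : ℝ => 3*x'^4 + 6*b21*x'^3*y - 12*a21*x'^2*y^2
            - 4*a21*b21*x'*y^3 - 6*a03*y^4)
        ((3*((4:ℕ)*x^(4-1)) + 6*b21*((3:ℕ)*x^(3-1))*y - 12*a21*((2:ℕ)*x^(2-1))*y^2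
            - 4*a21*b21*1*y^3)) x :=
      (((((hasDerivAt_pow 4 x).const_mul 3).add
          (((hasDerivAt_pow 3 x).const_mul (6*b21)).mul_const y)).sub
          (((hasDerivAt_pow 2 x).const_mul (12*a21)).mul_const (y^2))).sub
          (((hasDerivAt_id x).const_mul (4*a21*b21)).mul_const (y^3))).sub_const
          (6*a03*y^4)
    have big := (inner1.const_mul (3*(9*a03 + 2*a21^2))).sub
      (inner2.const_mul (3*a03 - 2*a21^2))
    erw [big.deriv]
    push_cast; ring
  -- ∂I/∂y
  have hIy : deriv (fun y' : ℝ => I x y') y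
      = 3*(9*a03 + 2*a21^2)*(2*b21*x - 4*a21*y)
        - (3*a03 - 2*a21^2)*(6*b21*x^3 - 24*a21*x^2*y - 12*a21*b21*x*y^2
            - 24*a03*y^3) := by
    have hfun : (fun y' : ℝ => I x y')
        = fun y' : ℝ => 3*(9*a03 + 2*a21^2)*(x^2 + 2*b21*x*y' - 2*a21*y'^2)
          - (3*a03 - 2*a21^2)*(3*x^4 + 6*b21*x^3*y' - 12*a21*x^2*y'^2
              - 4*a21*b21*x*y'^3 - 6*a03*y'^4) := funext fun y' => hI x y'
    rw [hfun]
    have inner1 : HasDerivAt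
        (fun y' : ℝ => x^2 + 2*b21*x*y' - 2*a21*y'^2)
        (2*b21*x*1 - 2*a21*((2:ℕ)*y^(2-1))) y :=
      ((((hasDerivAt_id y).const_mul (2*b21*x)).const_add (x^2)).sub
        ((hasDerivAt_pow 2 y).const_mul (2*a21)))
    have inner2 : HasDerivAt
        (fun y' : ℝ => 3*x^4 + 6*b21*x^3*y' - 12*a21*x^2*y'^2
            - 4*a21*b21*x*y'^3 - 6*a03*y'^4)
        ((6*b21*x^3*1 - 12*a21*x^2*((2:ℕ)*y^(2-1))
            - 4*a21*b21*x*((3:ℕ)*y^(3-1)) - 6*a03*((4:ℕ)*y^(4-1)))) y :=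
      (((((hasDerivAt_id y).const_mul (6*b21*x^3)).const_add (3*x^4)).sub
          ((hasDerivAt_pow 2 y).const_mul (12*a21*x^2))).sub
          ((hasDerivAt_pow 3 y).const_mul (4*a21*b21*x))).sub
          ((hasDerivAt_pow 4 y).const_mul (6*a03))
    have big := (inner1.const_mul (3*(9*a03 + 2*a21^2))).sub
      (inner2.const_mul (3*a03 - 2*a21^2))
    erw [big.deriv]
    push_cast; ring
  -- ∂P/∂x
  have hPx : deriv (fun x' : ℝ => P x' y) x = 2*a21*x*y := by
    have hfun : (fun x' : ℝ => P x' y)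
        = fun x' : ℝ => -a21*y + a21*x'^2*y + a03*y^3 := funext fun x' => hP x' y
    rw [hfun]
    have big : HasDerivAt
        (fun x' : ℝ => -a21*y + a21*x'^2*y + a03*y^3)
        (a21*((2:ℕ)*x^(2-1))*y) x :=
      ((((hasDerivAt_pow 2 x).const_mul a21).mul_const y).const_add
        (-a21*y)).add_const (a03*y^3)
    rw [big.deriv]
    push_cast; ring
  -- ∂Q/∂y
  have hQy : deriv (fun y' : ℝ => Q x y') y
      = -b21 + b21*x^2 - 2*a21*x*y - 2*a21*b21*y^2 := by
    have hfun : (fun y' : ℝ => Q x y')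
        = fun y' : ℝ => -x/2 + x^3/2 - b21*y' + b21*x^2*y' - a21*x*y'^2
            - (2/3)*a21*b21*y'^3 := funext fun y' => hQ x y'
    rw [hfun]
    have big : HasDerivAt
        (fun y' : ℝ => -x/2 + x^3/2 - b21*y' + b21*x^2*y' - a21*x*y'^2
            - (2/3)*a21*b21*y'^3)
        ((-(b21*1) + b21*x^2*1 - a21*x*((2:ℕ)*y^(2-1)))
          - (2/3)*a21*b21*((3:ℕ)*y^(3-1))) y :=
      (((((hasDerivAt_id y).const_mul b21).const_sub (-x/2 + x^3/2)).add
          ((hasDerivAt_id y).const_mul (b21*x^2))).sub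
          ((hasDerivAt_pow 2 y).const_mul (a21*x))).sub
          ((hasDerivAt_pow 3 y).const_mul ((2/3)*a21*b21))
    rw [big.deriv]
    push_cast; ring
  rw [hIx, hIy, hPx, hQy, hP, hQ, hI]
  linear_combination (2*x*y^3) * hcond
end

section
/- Let a21, a02, a12, b03, a03 be real numbers, and define P⁻(x,y) = 2·a21·x·y + a21·x²·y − (a02 + a12 + 6·b03)·y² − 3·b03·x·y² + a03·y³, Q(x,y) = x + (3/2)·x² − a21·y² + (1/2)·x³ − a21·x·y² + b03·y³, and H⁻(x,y) = −x²/2 − x³/2 + a21·x·y² − ((a02 + a12 + 6·b03)/3)·y³ − x⁴/8 + (a21/2)·x²·y² − b03·x·y³ + (a03/4)·y⁴. If J ⊆ ℝ is an open interval and x, y : ℝ → ℝ are differentiable on J with x′(t) = P⁻(x(t), y(t)) and y′(t) = Q(x(t), y(t)) for all t ∈ J, then the function t ↦ H⁻(x(t), y(t)) is constant on J. -/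
/-- Under bi-center condition VI, the Hamiltonian H⁻ is a first integral of
the lower system: it is constant along every solution defined on an open
interval J. -/
theorem stmt_10 (a21 a02 a12 b03 a03 : ℝ)
    (Pm Q Hm : ℝ → ℝ → ℝ)
    (hP : ∀ x y, Pm x y = 2*a21*x*y + a21*x^2*y - (a02 + a12 + 6*b03)*y^2
        - 3*b03*x*y^2 + a03*y^3)
    (hQ : ∀ x y, Q x y = x + (3/2)*x^2 - a21*y^2 + (1/2)*x^3 - a21*x*y^2 + b03*y^3)
    (hHm : ∀ x y, Hm x y = -x^2/2 - x^3/2 + a21*x*y^2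
        - ((a02 + a12 + 6*b03)/3)*y^3 - x^4/8 + (a21/2)*x^2*y^2
        - b03*x*y^3 + (a03/4)*y^4)
    (J : Set ℝ) (hJopen : IsOpen J) (hJconn : J.OrdConnected)
    (x y : ℝ → ℝ)
    (hx : ∀ t ∈ J, HasDerivAt x (Pm (x t) (y t)) t)
    (hy : ∀ t ∈ J, HasDerivAt y (Q (x t) (y t)) t) :
    ∀ t₁ ∈ J, ∀ t₂ ∈ J, Hm (x t₁) (y t₁) = Hm (x t₂) (y t₂) := by
  have key : ∀ t ∈ J, HasDerivAt (fun t => Hm (x t) (y t)) 0 t := by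
    intro t ht
    have hx' := hx t ht
    have hy' := hy t ht
    have h1 := ((hx'.pow 2).div_const 2).neg
    have h2 := (hx'.pow 3).div_const 2
    have h3 := ((hx'.mul (hy'.pow 2)).const_mul a21)
    have h4 := ((hy'.pow 3).const_mul ((a02 + a12 + 6*b03)/3))
    have h5 := (hx'.pow 4).div_const 8
    have h6 := (((hx'.pow 2).mul (hy'.pow 2)).const_mul (a21/2))
    have h7 := ((hx'.mul (hy'.pow 3)).const_mul b03)
    have h8 := ((hy'.pow 4).const_mul (a03/4))
    have H := (((((((h1.sub h2).add h3).sub h4).sub h5).add h6).sub h7).add h8)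
    have heq : (fun t => Hm (x t) (y t)) =
        fun t => -(x t)^2/2 - (x t)^3/2 + a21*(x t)*(y t)^2
          - ((a02 + a12 + 6*b03)/3)*(y t)^3 - (x t)^4/8
          + (a21/2)*(x t)^2*(y t)^2 - b03*(x t)*(y t)^3 + (a03/4)*(y t)^4 := by
      funext s; rw [hHm]
    rw [heq]
    convert H using 1
    · rfl
    · rfl
    · funext s; simp only [Pi.add_apply, Pi.sub_apply, Pi.neg_apply, Pi.mul_apply, Pi.pow_apply]; ring
    · rw [hP, hQ]; simp only [Pi.pow_apply]; ring
  have hconv : Convex ℝ J := hJconn.convex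
  intro t₁ h₁ t₂ h₂
  refine hconv.is_const_of_fderivWithin_eq_zero (𝕜 := ℝ)
    (f := fun t => Hm (x t) (y t)) ?_ ?_ h₁ h₂
  · intro t ht
    exact ((key t ht).differentiableAt).differentiableWithinAt
  · intro t ht
    have h0 : HasFDerivWithinAt (fun t => Hm (x t) (y t)) (0 : ℝ →L[ℝ] ℝ) J t := by
      have h := ((key t ht).hasDerivWithinAt (s := J)).hasFDerivWithinAt
      exact h.congr_fderiv (by ext; simp)
    exact h0.fderivWithin (hJopen.uniqueDiffWithinAt ht)
end

section
/- Let b21 be a nonzero real number. Then there is no real number p02 such that both (7·b21² + 40·b21·p02 − 80·p02²)·(29·b21² − 40·b21·p02 + 80·p02²) = 0 and 551·b21² + 1544·b21·p02 − 3088·p02² = 0 hold; equivalently, the polynomials V_{6a}(p02) = (7·b21² + 40·b21·p02 − 80·p02²)·(29·b21² − 40·b21·p02 + 80·p02²) and V_{6b}(p02) = 551·b21² + 1544·b21·p02 − 3088·p02² have no common real root. -/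
/-- For b21 ≠ 0 the polynomials V₆ₐ and V₆ᵦ (from case (ii-2) of the proof of
Theorem 2.2) have no common real root p02. -/
theorem stmt_13 (b21 : ℝ) (hb : b21 ≠ 0) :
    ¬ ∃ p02 : ℝ,
      (7*b21^2 + 40*b21*p02 - 80*p02^2)*(29*b21^2 - 40*b21*p02 + 80*p02^2) = 0 ∧
      551*b21^2 + 1544*b21*p02 - 3088*p02^2 = 0 := by
  rintro ⟨p02, h1, h2⟩
  have h4 : b21 ^ 4 = 0 := by
    linear_combination (-(37249 : ℝ)/11726208) * h1
      + ((35005*b21^2 - 38600*b21*p02 + 77200*p02^2)/11726208) * h2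
  exact hb (pow_eq_zero_iff (by norm_num) |>.mp h4)
end
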